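/- Let A be a unital JB-algebra (e.g., the selfadjoint part of a unital C*-algebra). For a, b in the interior A₊° of the positive cone, Hilbert's metric satisfies d_H(a,b) = ‖log(U_{b^{-1/2}} a)‖_v and Thompson's metric satisfies d_T(a,b) = ‖log(U_{b^{-1/2}} a)‖, where ‖c‖_v := max σ(c) - min σ(c). -/

import Mathlib

noncomputable section

variable {A : Type*} [CStarAlgebra A] [PartialOrder A] [StarOrderedRing A]

/-- `M(a/b) = inf {l > 0 : a ≤ l b}`. -/
def Mrel (a b : A) : ℝ := sInf {l : ℝ | 0 < l ∧ a ≤ l • b}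

/-- Thompson's metric. -/
def dT (a b : A) : ℝ := Real.log (max (Mrel a b) (Mrel b a))

/-- Hilbert's metric. -/
def dH (a b : A) : ℝ := Real.log (Mrel a b * Mrel b a)

/-- The variation seminorm `max σ(a) - min σ(a)`. -/
def vnorm (a : A) : ℝ := sSup (spectrum ℝ a) - sInf (spectrum ℝ a)

/-- Formulas for Hilbert's and Thompson's metrics on the interior of the cone:
`d_H(a,b) = ‖log (U_{b^{-1/2}} a)‖_v` and `d_T(a,b) = ‖log (U_{b^{-1/2}} a)‖`. -/
theorem stmt4 (a b : A) (ha0 : 0 ≤ a) (hau : IsUnit a) (hb0 : 0 ≤ b) (hbu : IsUnit b) :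
    dH a b =
      vnorm (cfc Real.log
        (cfc (fun x : ℝ => x ^ (-(1 : ℝ) / 2)) b * a * cfc (fun x : ℝ => x ^ (-(1 : ℝ) / 2)) b)) ∧
    dT a b =
      ‖cfc Real.log
        (cfc (fun x : ℝ => x ^ (-(1 : ℝ) / 2)) b * a * cfc (fun x : ℝ => x ^ (-(1 : ℝ) / 2)) b)‖ := by
  rcases subsingleton_or_nontrivial A with hA | hA
  · -- trivial algebra
    have hM : ∀ x y : A, Mrel x y = 0 := by
      intro x y
      have hset : {l : ℝ | 0 < l ∧ x ≤ l • y} = Set.Ioi 0 := by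
        ext l
        simp [Set.mem_Ioi, Subsingleton.elim x (l • y)]
      rw [Mrel, hset, csInf_Ioi]
    have hspec : ∀ x : A, spectrum ℝ x = ∅ := by
      intro x
      ext r
      simp [spectrum.mem_iff, isUnit_of_subsingleton]
    constructor
    · rw [dH, hM, hM, vnorm, hspec, Real.sSup_empty, Real.sInf_empty]
      simp
    · rw [dT, hM, hM, Subsingleton.elim (cfc Real.log _) (0 : A)]
      simp
  · -- nontrivial algebra
    have hbsa : IsSelfAdjoint b := .of_nonneg hb0
    have hbσ : ∀ x ∈ spectrum ℝ b, 0 < x := by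
      intro x hx
      refine (spectrum_nonneg_of_nonneg hb0 hx).lt_of_ne' ?_
      rintro rfl
      exact (spectrum.zero_notMem_iff ℝ).mpr hbu hx
    set f : ℝ → ℝ := fun x => x ^ (-(1 : ℝ) / 2) with hf
    have hfc : ContinuousOn f (spectrum ℝ b) := fun x hx =>
      (Real.continuousAt_rpow_const x _ (Or.inl (hbσ x hx).ne')).continuousWithinAt
    set g : ℝ → ℝ := fun x => x ^ ((1 : ℝ) / 2) with hg
    have hgc : ContinuousOn g (spectrum ℝ b) := fun x hx =>
      (Real.continuousAt_rpow_const x _ (Or.inl (hbσ x hx).ne')).continuousWithinAt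
    set s : A := cfc f b with hs
    set t : A := cfc g b with ht
    have hssa : IsSelfAdjoint s := cfc_predicate f b
    have htsa : IsSelfAdjoint t := cfc_predicate g b
    have hsu : IsUnit s := by
      refine isUnit_cfc f b hfc hbsa fun x hx => ?_
      exact (Real.rpow_pos_of_pos (hbσ x hx) _).ne'
    -- basic multiplicative identities
    have hts : t * s = 1 := by
      rw [hs, ht, ← cfc_mul _ _ b hgc hfc]
      rw [show (fun x => g x * f x) = fun x : ℝ => x ^ ((1:ℝ)/2) * x ^ (-(1:ℝ)/2) from rfl]
      calc cfc (fun x : ℝ => x ^ ((1:ℝ)/2) * x ^ (-(1:ℝ)/2)) b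
          = cfc (fun _ : ℝ => (1 : ℝ)) b := by
            apply cfc_congr
            intro x hx
            show x ^ ((1:ℝ)/2) * x ^ (-(1:ℝ)/2) = 1
            rw [← Real.rpow_add (hbσ x hx)]
            norm_num
        _ = 1 := by rw [cfc_const 1 b hbsa, map_one]
    have hst : s * t = 1 := by
      rw [hs, ht, ← cfc_mul _ _ b hfc hgc]
      calc cfc (fun x : ℝ => f x * g x) b
          = cfc (fun _ : ℝ => (1 : ℝ)) b := by
            apply cfc_congr
            intro x hx
            show x ^ (-(1:ℝ)/2) * x ^ ((1:ℝ)/2) = 1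
            rw [← Real.rpow_add (hbσ x hx)]
            norm_num
        _ = 1 := by rw [cfc_const 1 b hbsa, map_one]
    have htt : t * t = b := by
      rw [ht, ← cfc_mul _ _ b hgc hgc]
      calc cfc (fun x : ℝ => g x * g x) b
          = cfc (id : ℝ → ℝ) b := by
            apply cfc_congr
            intro x hx
            show x ^ ((1:ℝ)/2) * x ^ ((1:ℝ)/2) = x
            rw [← Real.rpow_add (hbσ x hx)]
            norm_num
        _ = b := cfc_id ℝ b hbsa
    have hsbs : s * b * s = 1 := by
      rw [show b = cfc (id : ℝ → ℝ) b from (cfc_id ℝ b hbsa).symm]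
      rw [hs, ← cfc_mul _ _ b hfc continuousOn_id, ← cfc_mul (fun x => f x * id x) _ b (hfc.mul continuousOn_id) hfc]
      calc cfc (fun x : ℝ => (fun x : ℝ => f x * id x) x * f x) b
          = cfc (fun _ : ℝ => (1 : ℝ)) b := by
            apply cfc_congr
            intro x hx
            show x ^ (-(1:ℝ)/2) * x * x ^ (-(1:ℝ)/2) = 1
            nth_rewrite 2 [show x = x ^ (1:ℝ) from (Real.rpow_one x).symm]
            rw [← Real.rpow_add (hbσ x hx), ← Real.rpow_add (hbσ x hx)]
            norm_num
        _ = 1 := by rw [cfc_const 1 b hbsa, map_one]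
    -- the central element
    set c : A := s * a * s with hc
    have hc0 : 0 ≤ c := by
      have := star_left_conjugate_nonneg ha0 s
      rwa [hssa.star_eq] at this
    have hcsa : IsSelfAdjoint c := .of_nonneg hc0
    have hcu : IsUnit c := (hsu.mul hau).mul hsu
    have hcσ : ∀ x ∈ spectrum ℝ c, 0 < x := by
      intro x hx
      refine (spectrum_nonneg_of_nonneg hc0 hx).lt_of_ne' ?_
      rintro rfl
      exact (spectrum.zero_notMem_iff ℝ).mpr hcu hx
    -- conjugation inversion identities
    have hinv : ∀ u : A, t * (s * u * s) * t = u := by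
      intro u
      calc t * (s * u * s) * t = (t * s) * u * (s * t) := by noncomm_ring
        _ = u := by rw [hts, hst, one_mul, mul_one]
    have conj_iff : ∀ u v : A, s * u * s ≤ s * v * s ↔ u ≤ v := by
      intro u v
      constructor
      · intro h
        have := htsa.conjugate_le_conjugate h
        rwa [hinv u, hinv v] at this
      · intro h
        exact hssa.conjugate_le_conjugate h
    -- spectrum facts
    have hc_ne : (spectrum ℝ c).Nonempty := hcsa.spectrum_nonempty
    have hc_cpt : IsCompact (spectrum ℝ c) :=
      ContinuousFunctionalCalculus.isCompact_spectrum c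
    have hbdda : BddAbove (spectrum ℝ c) := hc_cpt.bddAbove
    have hbddb : BddBelow (spectrum ℝ c) := hc_cpt.bddBelow
    set S : ℝ := sSup (spectrum ℝ c) with hSdef
    set I : ℝ := sInf (spectrum ℝ c) with hIdef
    have hSmem : S ∈ spectrum ℝ c := hc_cpt.sSup_mem hc_ne
    have hImem : I ∈ spectrum ℝ c := hc_cpt.sInf_mem hc_ne
    have hS : 0 < S := hcσ S hSmem
    have hI : 0 < I := hcσ I hImem
    -- key order equivalences
    have keyab : ∀ l : ℝ, (a ≤ l • b ↔ c ≤ l • 1) := by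
      intro l
      rw [← conj_iff a (l • b), hc]
      have : s * (l • b) * s = l • 1 := by
        rw [mul_smul_comm, smul_mul_assoc, hsbs]
      rw [this]
    have keyba : ∀ l : ℝ, (b ≤ l • a ↔ 1 ≤ l • c) := by
      intro l
      rw [← conj_iff b (l • a), hsbs, hc]
      have : s * (l • a) * s = l • (s * a * s) := by
        rw [mul_smul_comm, smul_mul_assoc]
      rw [this]
    have hc_le : ∀ l : ℝ, (c ≤ l • 1 ↔ ∀ x ∈ spectrum ℝ c, x ≤ l) := by
      intro l
      rw [← Algebra.algebraMap_eq_smul_one]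
      exact le_algebraMap_iff_spectrum_le hcsa
    have hone_le : ∀ l : ℝ, 0 < l → (1 ≤ l • c ↔ I⁻¹ ≤ l) := by
      intro l hl
      rw [← cfc_const_mul_id l c hcsa,
        one_le_cfc_iff (fun x => l * x) c (by fun_prop) hcsa]
      constructor
      · intro h
        have h1 : (1 : ℝ) ≤ l * I := h I hImem
        rw [inv_le_iff_one_le_mul₀ hI]
        linarith [mul_comm l I]
      · intro h x hx
        have hx0 : 0 < x := hcσ x hx
        have hIx : I ≤ x := csInf_le hbddb hx
        calc (1 : ℝ) = I⁻¹ * I := by field_simp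
          _ ≤ l * x := by
              apply mul_le_mul h hIx hI.le hl.le
    -- compute the Mrel values
    have hMab : Mrel a b = S := by
      have hset : {l : ℝ | 0 < l ∧ a ≤ l • b} = Set.Ici S := by
        ext l
        simp only [Set.mem_setOf_eq, Set.mem_Ici, keyab, hc_le]
        constructor
        · rintro ⟨hl, h⟩
          exact csSup_le hc_ne h
        · intro h
          exact ⟨hS.trans_le h, fun x hx => (le_csSup hbdda hx).trans h⟩
      rw [Mrel, hset, csInf_Ici]
    have hMba : Mrel b a = I⁻¹ := by
      have hset : {l : ℝ | 0 < l ∧ b ≤ l • a} = Set.Ici I⁻¹ := by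
        ext l
        simp only [Set.mem_setOf_eq, Set.mem_Ici, keyba]
        constructor
        · rintro ⟨hl, h⟩
          exact (hone_le l hl).mp h
        · intro h
          have hl : 0 < l := lt_of_lt_of_le (inv_pos.mpr hI) h
          exact ⟨hl, (hone_le l hl).mpr h⟩
      rw [Mrel, hset, csInf_Ici]
    -- spectrum of the logarithm
    have hlogc : ContinuousOn Real.log (spectrum ℝ c) := fun x hx =>
      (Real.continuousAt_log (hcσ x hx).ne').continuousWithinAt
    have hmap : spectrum ℝ (cfc Real.log c) = Real.log '' spectrum ℝ c :=
      cfc_map_spectrum Real.log c hcsa hlogc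
    have hsup : sSup (Real.log '' spectrum ℝ c) = Real.log S := by
      apply IsGreatest.csSup_eq
      refine ⟨⟨S, hSmem, rfl⟩, ?_⟩
      rintro _ ⟨x, hx, rfl⟩
      exact Real.log_le_log (hcσ x hx) (le_csSup hbdda hx)
    have hinf : sInf (Real.log '' spectrum ℝ c) = Real.log I := by
      apply IsLeast.csInf_eq
      refine ⟨⟨I, hImem, rfl⟩, ?_⟩
      rintro _ ⟨x, hx, rfl⟩
      exact Real.log_le_log hI (csInf_le hbddb hx)
    constructor
    · -- Hilbert metric
      rw [dH, hMab, hMba, vnorm, hmap, hsup, hinf,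
        Real.log_mul hS.ne' (inv_ne_zero hI.ne'), Real.log_inv]
      ring
    · -- Thompson metric
      rw [dT, hMab, hMba]
      have hgt := IsGreatest.norm_cfc Real.log c hlogc hcsa
      have hgt2 : IsGreatest ((fun x => ‖Real.log x‖) '' spectrum ℝ c)
          (max (Real.log S) (-Real.log I)) := by
        constructor
        · rcases le_total (-Real.log I) (Real.log S) with h | h
          · refine ⟨S, hSmem, ?_⟩
            have hIS : Real.log I ≤ Real.log S :=
              Real.log_le_log hI (csInf_le_csSup hc_ne hbddb hbdda)
            have h0 : 0 ≤ Real.log S := by linarith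
            show ‖Real.log S‖ = _
            rw [max_eq_left h, Real.norm_eq_abs, abs_of_nonneg h0]
          · refine ⟨I, hImem, ?_⟩
            have hIS : Real.log I ≤ Real.log S :=
              Real.log_le_log hI (csInf_le_csSup hc_ne hbddb hbdda)
            have h0 : Real.log I ≤ 0 := by linarith
            show ‖Real.log I‖ = _
            rw [max_eq_right h, Real.norm_eq_abs, abs_of_nonpos h0]
        · rintro _ ⟨x, hx, rfl⟩
          show ‖Real.log x‖ ≤ _
          rw [Real.norm_eq_abs, abs_le]
          constructor
          · have : Real.log I ≤ Real.log x := Real.log_le_log hI (csInf_le hbddb hx)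
            have : -(max (Real.log S) (-Real.log I)) ≤ Real.log I := by
              have := le_max_right (Real.log S) (-Real.log I)
              linarith
            linarith
          · exact le_trans (Real.log_le_log (hcσ x hx) (le_csSup hbdda hx))
              (le_max_left _ _)
      rw [hgt.unique hgt2]
      rcases le_total S I⁻¹ with h | h
      · rw [max_eq_right h, max_eq_right, Real.log_inv]
        rw [← Real.log_inv]
        exact Real.log_le_log hS h
      · rw [max_eq_left h, max_eq_left]
        rw [← Real.log_inv]
        exact Real.log_le_log (inv_pos.mpr hI) h
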